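/- Let (X,+) be an abelian group equipped with a translation-invariant metric d such that X is complete and locally compact. Then the spectre operator S is upper-semicontinuous at every nonempty compact set A ⊆ X: for every ε > 0 there exists δ > 0 such that for every nonempty compact set B ⊆ X with d_H(A,B) < δ one has S(B) ⊆ {x ∈ X : there exists a ∈ S(A) with d(x,a) < ε}. -/

import Mathlib

open Metric Filter

/-- The spectre of a set `A` in an abelian group. -/
def spectre {X : Type*} [AddCommGroup X] (A : Set X) : Set X :=
  {z | ∀ x ∈ A, x + z ∈ A ∨ x - z ∈ A}

section Aux

variable {X : Type*} [AddCommGroup X] [MetricSpace X]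

lemma spectre_dist_neg (hd : ∀ x y z : X, dist (x + z) (y + z) = dist x y)
    (x y : X) : dist (-x) (-y) = dist x y := by
  have h := hd (-x) (-y) (x + y)
  have h1 : -x + (x + y) = y := by abel
  have h2 : -y + (x + y) = x := by abel
  rw [h1, h2] at h
  rw [← h, dist_comm]

lemma spectre_dist_add_add (hd : ∀ x y z : X, dist (x + z) (y + z) = dist x y)
    (x y u v : X) : dist (x + u) (y + v) ≤ dist x y + dist u v := by
  calc dist (x + u) (y + v) ≤ dist (x + u) (y + u) + dist (y + u) (y + v) :=
        dist_triangle _ _ _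
    _ = dist x y + dist u v := by
        rw [hd x y u, add_comm y u, add_comm y v, hd u v y]

lemma spectre_dist_sub_sub (hd : ∀ x y z : X, dist (x + z) (y + z) = dist x y)
    (x y u v : X) : dist (x - u) (y - v) ≤ dist x y + dist u v := by
  have := spectre_dist_add_add hd x y (-u) (-v)
  rw [spectre_dist_neg hd] at this
  simpa [sub_eq_add_neg] using this

lemma spectre_dist_sub_zero (hd : ∀ x y z : X, dist (x + z) (y + z) = dist x y)
    (p a : X) : dist (p - a) 0 = dist p a := by
  have h := hd p a (-a)
  simpa [sub_eq_add_neg] using h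

end Aux

theorem spectre_upperSemicontinuous {X : Type*} [AddCommGroup X] [MetricSpace X]
    [CompleteSpace X] [LocallyCompactSpace X]
    (hd : ∀ x y z : X, dist (x + z) (y + z) = dist x y)
    (A : Set X) (hAne : A.Nonempty) (hAc : IsCompact A) :
    ∀ ε > 0, ∃ δ > 0, ∀ B : Set X, B.Nonempty → IsCompact B →
      hausdorffDist A B < δ →
      spectre B ⊆ {x : X | ∃ a ∈ spectre A, dist x a < ε} := by
  intro ε hε
  by_contra hcon
  push_neg at hcon
  -- a compact closed ball around 0
  obtain ⟨Kc, hKcc, hKcn⟩ := exists_compact_mem_nhds (0 : X)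
  obtain ⟨r, hr, hball⟩ := Metric.mem_nhds_iff.mp hKcn
  set R : ℝ := r / 2 with hRdef
  have hR : 0 < R := by positivity
  have hcb : IsCompact (closedBall (0 : X) R) :=
    hKcc.of_isClosed_subset isClosed_closedBall
      ((closedBall_subset_ball (by simp [hRdef]; linarith)).trans hball)
  -- pick bad sets B n and points z n
  have H : ∀ n : ℕ, ∃ B : Set X, B.Nonempty ∧ IsCompact B ∧
      hausdorffDist A B < min R (1 / (n + 1)) ∧
      ∃ zz ∈ spectre B, ∀ a ∈ spectre A, ε ≤ dist zz a := by
    intro n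
    have hpos : 0 < min R (1 / (n + 1 : ℝ)) := lt_min hR (by positivity)
    obtain ⟨B, hBne, hBc, hBd, hBsub⟩ := hcon _ hpos
    obtain ⟨zz, hzz, hzz'⟩ := Set.not_subset.mp hBsub
    refine ⟨B, hBne, hBc, hBd, zz, hzz, ?_⟩
    intro a ha
    by_contra hlt
    exact hzz' ⟨a, ha, not_le.mp hlt⟩
  choose B hBne hBc hBd z hzB hz using H
  -- edist finiteness
  have hfin : ∀ n, EMetric.hausdorffEdist A (B n) ≠ ⊤ := fun n =>
    hausdorffEdist_ne_top_of_nonempty_of_bounded hAne (hBne n)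
      hAc.isBounded (hBc n).isBounded
  -- the compact container
  set f : (X × X) × (X × X) → X := fun p => (p.1.1 + p.1.2) - (p.2.1 + p.2.2) with hfdef
  have hflip : LipschitzWith 4 f := by
    apply LipschitzWith.of_dist_le_mul
    intro p q
    have h1 : dist (f p) (f q) ≤ (dist p.1.1 q.1.1 + dist p.1.2 q.1.2) +
        (dist p.2.1 q.2.1 + dist p.2.2 q.2.2) := by
      refine (spectre_dist_sub_sub hd _ _ _ _).trans ?_
      gcongr
      · exact spectre_dist_add_add hd _ _ _ _
      · exact spectre_dist_add_add hd _ _ _ _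
    have e1 : dist p.1 q.1 ≤ dist p q := by rw [Prod.dist_eq]; exact le_max_left _ _
    have e2 : dist p.2 q.2 ≤ dist p q := by rw [Prod.dist_eq]; exact le_max_right _ _
    have e11 : dist p.1.1 q.1.1 ≤ dist p q :=
      le_trans (by rw [Prod.dist_eq]; exact le_max_left _ _) e1
    have e12 : dist p.1.2 q.1.2 ≤ dist p q :=
      le_trans (by rw [Prod.dist_eq]; exact le_max_right _ _) e1
    have e21 : dist p.2.1 q.2.1 ≤ dist p q :=
      le_trans (by rw [Prod.dist_eq]; exact le_max_left _ _) e2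
    have e22 : dist p.2.2 q.2.2 ≤ dist p q :=
      le_trans (by rw [Prod.dist_eq]; exact le_max_right _ _) e2
    have : ((4 : NNReal) : ℝ) = 4 := by norm_num
    rw [this]
    linarith
  set K : Set X := f '' ((A ×ˢ closedBall (0 : X) R) ×ˢ (A ×ˢ closedBall (0 : X) R))
    with hKdef
  have hKcomp : IsCompact K :=
    (((hAc.prod hcb).prod (hAc.prod hcb)).image hflip.continuous)
  -- each z n lies in K
  have hsubK : ∀ n, ∀ p ∈ B n, ∀ q ∈ B n, p - q ∈ K := by
    intro n p hp q hq
    have hdlt : hausdorffDist A (B n) < R := lt_of_lt_of_le (hBd n) (min_le_left _ _)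
    obtain ⟨a, ha, hpa⟩ := exists_dist_lt_of_hausdorffDist_lt' hp hdlt (hfin n)
    obtain ⟨b, hb, hqb⟩ := exists_dist_lt_of_hausdorffDist_lt' hq hdlt (hfin n)
    refine ⟨((a, p - a), (b, q - b)), ?_, ?_⟩
    · refine ⟨⟨ha, ?_⟩, ⟨hb, ?_⟩⟩
      · rw [mem_closedBall, spectre_dist_sub_zero hd, dist_comm]; exact hpa.le
      · rw [mem_closedBall, spectre_dist_sub_zero hd, dist_comm]; exact hqb.le
    · simp only [hfdef]
      abel
  have hzK : ∀ n, z n ∈ K := by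
    intro n
    obtain ⟨x₀, hx₀⟩ := hBne n
    rcases hzB n x₀ hx₀ with h | h
    · have : z n = (x₀ + z n) - x₀ := by abel
      rw [this]; exact hsubK n _ h _ hx₀
    · have : z n = x₀ - (x₀ - z n) := by abel
      rw [this]; exact hsubK n _ hx₀ _ h
  -- extract convergent subsequence
  obtain ⟨z₀, _, φ, hφ, hconv⟩ := hKcomp.tendsto_subseq hzK
  -- z₀ belongs to spectre A
  have hz₀ : z₀ ∈ spectre A := by
    intro x hx
    by_contra hne
    push_neg at hne
    obtain ⟨h1, h2⟩ := hne
    have hi1 : 0 < infDist (x + z₀) A := by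
      rcases (infDist_nonneg (s := A) (x := x + z₀)).lt_or_eq with h | h
      · exact h
      · exact absurd ((hAc.isClosed.mem_iff_infDist_zero hAne).mpr h.symm) h1
    have hi2 : 0 < infDist (x - z₀) A := by
      rcases (infDist_nonneg (s := A) (x := x - z₀)).lt_or_eq with h | h
      · exact h
      · exact absurd ((hAc.isClosed.mem_iff_infDist_zero hAne).mpr h.symm) h2
    set c : ℝ := min (infDist (x + z₀) A) (infDist (x - z₀) A) with hcdef
    have hc : 0 < c := lt_min hi1 hi2
    -- choose a large index
    obtain ⟨N, hN⟩ := (Metric.tendsto_atTop.mp hconv) (c / 3) (by positivity)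
    obtain ⟨m, hm⟩ := exists_nat_one_div_lt (show (0 : ℝ) < c / 3 by positivity)
    set n := max N m with hndef
    set k := φ n with hkdef
    have hnN : N ≤ n := le_max_left _ _
    have hzdist : dist (z k) z₀ < c / 3 := hN n hnN
    have hmono : (1 : ℝ) / (k + 1) ≤ 1 / (m + 1) := by
      have hkm : (m : ℝ) ≤ k := by
        have h1 : m ≤ n := le_max_right _ _
        have h2 : n ≤ φ n := hφ.le_apply
        exact_mod_cast h1.trans h2
      apply one_div_le_one_div_of_le (by positivity)
      linarith
    have hsmall : (1 : ℝ) / (k + 1) < c / 3 := lt_of_le_of_lt hmono hm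
    -- pick a point of B k near x
    have hdk : hausdorffDist A (B k) < min R (1 / (k + 1)) := hBd k
    obtain ⟨xb, hxb, hdxb⟩ := exists_dist_lt_of_hausdorffDist_lt hx hdk (hfin k)
    have hdxb' : dist x xb < c / 3 :=
      lt_trans (lt_of_lt_of_le hdxb (min_le_right _ _)) hsmall
    -- distance of any point of B k to A
    have hinfB : ∀ y ∈ B k, infDist y A < c / 3 := by
      intro y hy
      have := infDist_le_hausdorffDist_of_mem hy
        (by rw [EMetric.hausdorffEdist_comm]; exact hfin k)
      rw [hausdorffDist_comm] at this
      exact lt_of_le_of_lt (this.trans (le_of_lt (lt_of_lt_of_le hdk (min_le_right _ _))))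
        hsmall
    rcases hzB k xb hxb with h | h
    · -- x + z₀ is within c of A
      have h3 : infDist (x + z₀) A ≤ infDist (xb + z k) A + dist (x + z₀) (xb + z k) :=
        infDist_le_infDist_add_dist
      have h4 : dist (x + z₀) (xb + z k) ≤ dist x xb + dist z₀ (z k) :=
        spectre_dist_add_add hd _ _ _ _
      have h5 : infDist (xb + z k) A < c / 3 := hinfB _ h
      have h6 : dist z₀ (z k) < c / 3 := by rw [dist_comm]; exact hzdist
      have : infDist (x + z₀) A < c := by
        have := h3.trans_lt (by linarith : infDist (xb + z k) A +
          dist (x + z₀) (xb + z k) < c)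
        exact this
      have hcle : c ≤ infDist (x + z₀) A := min_le_left _ _
      linarith
    · have h3 : infDist (x - z₀) A ≤ infDist (xb - z k) A + dist (x - z₀) (xb - z k) :=
        infDist_le_infDist_add_dist
      have h4 : dist (x - z₀) (xb - z k) ≤ dist x xb + dist z₀ (z k) :=
        spectre_dist_sub_sub hd _ _ _ _
      have h5 : infDist (xb - z k) A < c / 3 := hinfB _ h
      have h6 : dist z₀ (z k) < c / 3 := by rw [dist_comm]; exact hzdist
      have : infDist (x - z₀) A < c := by
        have := h3.trans_lt (by linarith : infDist (xb - z k) A +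
          dist (x - z₀) (xb - z k) < c)
        exact this
      have hcle : c ≤ infDist (x - z₀) A := min_le_right _ _
      linarith
  -- final contradiction
  obtain ⟨N, hN⟩ := (Metric.tendsto_atTop.mp hconv) ε hε
  have h1 : ε ≤ dist (z (φ N)) z₀ := hz (φ N) z₀ hz₀
  have h2 : dist (z (φ N)) z₀ < ε := hN N le_rfl
  linarith
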